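/- ∫₀^∞ x³/(eˣ - 1) dx = π⁴/15. -/

import Mathlib

open Real MeasureTheory

lemma aux_integrable (n : ℕ) :
    IntegrableOn (fun t : ℝ => t ^ 3 * Real.exp (-((n + 1 : ℝ) * t))) (Set.Ioi 0) := by
  have h := integrableOn_rpow_mul_exp_neg_mul_rpow (p := 1) (s := 3) (b := (n + 1 : ℝ))
    (by norm_num) (by norm_num) (by positivity)
  refine h.congr_fun (fun t ht => ?_) measurableSet_Ioi
  rw [Set.mem_Ioi] at ht
  dsimp only
  rw [Real.rpow_one, show (3 : ℝ) = ((3 : ℕ) : ℝ) by norm_num, Real.rpow_natCast, neg_mul]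

lemma aux_integral (n : ℕ) :
    ∫ t in Set.Ioi (0 : ℝ), t ^ 3 * Real.exp (-((n + 1 : ℝ) * t)) = 6 / (n + 1 : ℝ) ^ 4 := by
  have h := Real.integral_rpow_mul_exp_neg_mul_Ioi (a := 4) (r := (n + 1 : ℝ))
    (by norm_num) (by positivity)
  have heq : ∀ t ∈ Set.Ioi (0 : ℝ),
      t ^ ((4 : ℝ) - 1) * Real.exp (-((n + 1 : ℝ) * t)) =
        t ^ 3 * Real.exp (-((n + 1 : ℝ) * t)) := by
    intro t ht
    rw [Set.mem_Ioi] at ht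
    rw [show (4 : ℝ) - 1 = ((3 : ℕ) : ℝ) by norm_num, Real.rpow_natCast]
  rw [setIntegral_congr_fun measurableSet_Ioi heq] at h
  rw [h]
  have hG : Real.Gamma 4 = 6 := by
    rw [show (4 : ℝ) = ((3 : ℕ) : ℝ) + 1 by norm_num, Real.Gamma_nat_eq_factorial]
    norm_num [Nat.factorial]
  rw [hG, show (4 : ℝ) = ((4 : ℕ) : ℝ) by norm_num, Real.rpow_natCast, div_pow, one_pow]
  ring

lemma aux_hasSum (t : ℝ) (ht : 0 < t) :
    HasSum (fun n : ℕ => t ^ 3 * Real.exp (-((n + 1 : ℝ) * t)))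
      (t ^ 3 / (Real.exp t - 1)) := by
  have hr : |Real.exp (-t)| < 1 := by
    rw [abs_of_pos (Real.exp_pos _)]
    exact Real.exp_lt_one_iff.mpr (by linarith)
  have hgeo := hasSum_geometric_of_abs_lt_one hr
  have h1 : HasSum (fun n : ℕ => Real.exp (-t) ^ (n + 1))
      ((1 - Real.exp (-t))⁻¹ - 1) := by
    have := (hasSum_nat_add_iff' 1).mpr hgeo
    simpa using this
  have h2 := h1.mul_left (t ^ 3)
  have key : (fun n : ℕ => t ^ 3 * Real.exp (-t) ^ (n + 1)) =
      fun n : ℕ => t ^ 3 * Real.exp (-((n + 1 : ℝ) * t)) := by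
    funext n
    rw [← Real.exp_nat_mul]
    congr 1
    push_cast
    ring
  rw [key] at h2
  convert h2 using 1
  case e'_3 => rfl
  have hexp1 : (1 : ℝ) < Real.exp t := by
    rw [show (1 : ℝ) = Real.exp 0 by simp]
    exact Real.exp_lt_exp.mpr ht
  have he : Real.exp t - 1 ≠ 0 := by linarith
  have hE : Real.exp t ≠ 0 := (Real.exp_pos t).ne'
  have he2 : 1 - Real.exp (-t) ≠ 0 := by
    have : Real.exp (-t) < 1 := Real.exp_lt_one_iff.mpr (by linarith)
    linarith
  have hx : (1 - Real.exp (-t))⁻¹ - 1 = 1 / (Real.exp t - 1) := by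
    rw [Real.exp_neg] at he2 ⊢
    field_simp
    ring
  rw [hx]
  ring

/-- `∫₀^∞ x³/(eˣ - 1) dx = π⁴/15`. -/
theorem integral_cube_div_exp_sub_one :
    ∫ x in Set.Ioi (0 : ℝ), x ^ 3 / (Real.exp x - 1) = Real.pi ^ 4 / 15 := by
  have hz : HasSum (fun n : ℕ => 6 / ((n : ℝ) + 1) ^ 4) (Real.pi ^ 4 / 15) := by
    have h4 := hasSum_zeta_four
    have h5 := (hasSum_nat_add_iff' 1).mpr h4
    push_cast at h5
    norm_num at h5
    have h6 := h5.mul_left 6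
    have h7 : (fun n : ℕ => 6 / ((n : ℝ) + 1) ^ 4) =
        fun n : ℕ => 6 * (((n : ℝ) + 1) ^ 4)⁻¹ := by funext n; ring
    rw [h7, show Real.pi ^ 4 / 15 = 6 * (Real.pi ^ 4 / 90) by ring]
    exact h6
  have hint := fun n : ℕ => aux_integrable n
  have hnorm : ∀ n : ℕ, ∫ t in Set.Ioi (0 : ℝ),
      ‖t ^ 3 * Real.exp (-((n + 1 : ℝ) * t))‖ = 6 / (n + 1 : ℝ) ^ 4 := by
    intro n
    rw [← aux_integral n]
    refine setIntegral_congr_fun measurableSet_Ioi (fun t ht => ?_)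
    rw [Set.mem_Ioi] at ht
    rw [Real.norm_eq_abs, abs_of_nonneg (by positivity)]
  have hsum : Summable fun n : ℕ => ∫ t in Set.Ioi (0 : ℝ),
      ‖t ^ 3 * Real.exp (-((n + 1 : ℝ) * t))‖ := by
    simp_rw [hnorm]
    exact hz.summable
  have key := hasSum_integral_of_summable_integral_norm hint hsum
  have htsum : ∀ᵐ t ∂(volume.restrict (Set.Ioi (0 : ℝ))),
      (∑' n : ℕ, t ^ 3 * Real.exp (-((n + 1 : ℝ) * t))) = t ^ 3 / (Real.exp t - 1) := by
    filter_upwards [ae_restrict_mem measurableSet_Ioi] with t ht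
    exact (aux_hasSum t ht).tsum_eq
  rw [integral_congr_ae htsum] at key
  simp_rw [aux_integral] at key
  exact key.unique hz
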